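/- Preservation at type Idx: if ⊢ M : Idx is derivable for a closed qPCF term M and M ⇓¹ N, then ⊢ N : Idx is derivable. -/

import Mathlib

set_option maxHeartbeats 1000000

namespace QPCF

-- qPCF terms and types, mutually defined (types contain index terms in `circ`).
mutual
inductive Tm : Type
  | var : ℕ → Tm
  | lam : ℕ → Ty → Tm → Tm
  | app : Tm → Tm → Tm
  | num : ℕ → Tm
  | predOp : Tm
  | succOp : Tm
  | ifOp : Tm
  | fix : Ty → Tm
  | setOp : Tm
  | getOp : Tm
  | gate : ℕ → ℕ → Tm      -- `gate u k` : gate named `u` in 𝒰(k), i.e. of arity k+1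
  | seqOp : Tm              -- sequential composition ∶
  | parOp : Tm              -- parallel composition ∥
  | iterOp : Tm
  | revOp : Tm
  | add : Tm → Tm → Tm      -- index operation +
  | mul : Tm → Tm → Tm      -- index operation *
  | size : Tm → Tm
  | dmeasOp : Tm

inductive Ty : Type
  | nat : Ty
  | idx : Ty
  | circ : Tm → Ty
  | arrow : Ty → Ty → Ty    -- σ → τ  (abbreviation for Πx^σ.τ with x not free in τ)
  | pi : ℕ → Ty → Ty → Ty
end

-- Substitution of term `N` for variable `x` in terms and in types.
mutual
def substTm : Tm → ℕ → Tm → Tm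
  | Tm.var y, x, N => if y = x then N else Tm.var y
  | Tm.lam y σ M, x, N => Tm.lam y (substTy σ x N) (if y = x then M else substTm M x N)
  | Tm.app M₁ M₂, x, N => Tm.app (substTm M₁ x N) (substTm M₂ x N)
  | Tm.num n, _, _ => Tm.num n
  | Tm.predOp, _, _ => Tm.predOp
  | Tm.succOp, _, _ => Tm.succOp
  | Tm.ifOp, _, _ => Tm.ifOp
  | Tm.fix σ, x, N => Tm.fix (substTy σ x N)
  | Tm.setOp, _, _ => Tm.setOp
  | Tm.getOp, _, _ => Tm.getOp
  | Tm.gate u k, _, _ => Tm.gate u k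
  | Tm.seqOp, _, _ => Tm.seqOp
  | Tm.parOp, _, _ => Tm.parOp
  | Tm.iterOp, _, _ => Tm.iterOp
  | Tm.revOp, _, _ => Tm.revOp
  | Tm.add E₀ E₁, x, N => Tm.add (substTm E₀ x N) (substTm E₁ x N)
  | Tm.mul E₀ E₁, x, N => Tm.mul (substTm E₀ x N) (substTm E₁ x N)
  | Tm.size M, x, N => Tm.size (substTm M x N)
  | Tm.dmeasOp, _, _ => Tm.dmeasOp

def substTy : Ty → ℕ → Tm → Ty
  | Ty.nat, _, _ => Ty.nat
  | Ty.idx, _, _ => Ty.idx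
  | Ty.circ E, x, N => Ty.circ (substTm E x N)
  | Ty.arrow σ τ, x, N => Ty.arrow (substTy σ x N) (substTy τ x N)
  | Ty.pi y σ τ, x, N => Ty.pi y (substTy σ x N) (if y = x then τ else substTy τ x N)
end

-- Free variables of terms and types.
mutual
def freeTm : Tm → Finset ℕ
  | Tm.var y => {y}
  | Tm.lam y σ M => freeTy σ ∪ (freeTm M \ {y})
  | Tm.app M₁ M₂ => freeTm M₁ ∪ freeTm M₂
  | Tm.num _ => ∅
  | Tm.predOp => ∅
  | Tm.succOp => ∅
  | Tm.ifOp => ∅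
  | Tm.fix σ => freeTy σ
  | Tm.setOp => ∅
  | Tm.getOp => ∅
  | Tm.gate _ _ => ∅
  | Tm.seqOp => ∅
  | Tm.parOp => ∅
  | Tm.iterOp => ∅
  | Tm.revOp => ∅
  | Tm.add E₀ E₁ => freeTm E₀ ∪ freeTm E₁
  | Tm.mul E₀ E₁ => freeTm E₀ ∪ freeTm E₁
  | Tm.size M => freeTm M
  | Tm.dmeasOp => ∅

def freeTy : Ty → Finset ℕ
  | Ty.nat => ∅
  | Ty.idx => ∅
  | Ty.circ E => freeTm E
  | Ty.arrow σ τ => freeTy σ ∪ freeTy τ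
  | Ty.pi y σ τ => freeTy σ ∪ (freeTy τ \ {y})
end

/-- Bases: finite lists of (variable, type) pairs. -/
abbrev Base := List (ℕ × Ty)

def dom (B : Base) : List ℕ := B.map Prod.fst
def codom (B : Base) : List Ty := B.map Prod.snd
def substBase (B : Base) (x : ℕ) (N : Tm) : Base := B.map fun p => (p.1, substTy p.2 x N)

/-- The function `surf`: collects the typings `B' ⊢ E : Idx` for all index
expressions `E` occurring in Circ-types inside a type. -/
def surfTy : Base → Ty → List (Base × Tm)
  | _, Ty.nat => []
  | _, Ty.idx => []
  | B, Ty.circ E => [(B, E)]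
  | B, Ty.arrow σ τ => surfTy B σ ++ surfTy B τ
  | B, Ty.pi x σ τ => surfTy B σ ++ surfTy ((x, σ) :: B) τ

/-- `surf` extended to a finite set (list) of types. -/
def surfList (B : Base) (l : List Ty) : List (Base × Tm) :=
  (l.map (surfTy B)).flatten

/-- Shape of types admissible for the fixpoint combinator: τ₁ → … → τₙ → γ
with γ ∈ {Nat, Circ E}. -/
inductive YShape : Ty → Prop
  | nat : YShape Ty.nat
  | circ (E : Tm) : YShape (Ty.circ E)
  | arrow (τ σ : Ty) : YShape σ → YShape (Ty.arrow τ σ)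

/-- The typing judgment of qPCF (Table 1). -/
inductive Judg : Base → Tm → Ty → Prop
  | var {B : Base} {x : ℕ} {σ : Ty} :
      (x, σ) ∈ B →
      (∀ p ∈ surfList B (codom B), Judg p.1 p.2 Ty.idx) →
      Judg B (Tm.var x) σ
  | lam {B : Base} {x : ℕ} {σ τ : Ty} {N : Tm} :
      x ∉ dom B → Judg ((x, σ) :: B) N τ →
      Judg B (Tm.lam x σ N) (Ty.pi x σ τ)
  | appPi {B : Base} {P Q : Tm} {x : ℕ} {σ τ : Ty} :
      Judg B P (Ty.pi x σ τ) → Judg B Q σ →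
      Judg B (Tm.app P Q) (substTy τ x Q)
  | appArrow {B : Base} {P Q : Tm} {σ τ : Ty} :
      Judg B P (Ty.arrow σ τ) → Judg B Q σ →
      Judg B (Tm.app P Q) τ
  | succ {B : Base} :
      (∀ p ∈ surfList B (codom B), Judg p.1 p.2 Ty.idx) →
      Judg B Tm.succOp (Ty.arrow Ty.nat Ty.nat)
  | pred {B : Base} :
      (∀ p ∈ surfList B (codom B), Judg p.1 p.2 Ty.idx) →
      Judg B Tm.predOp (Ty.arrow Ty.nat Ty.nat)
  | ifNat {B : Base} :
      (∀ p ∈ surfList B (codom B), Judg p.1 p.2 Ty.idx) →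
      Judg B Tm.ifOp (Ty.arrow Ty.nat (Ty.arrow Ty.nat (Ty.arrow Ty.nat Ty.nat)))
  | ifCirc {B : Base} {E : Tm} :
      Judg B E Ty.idx →
      Judg B Tm.ifOp (Ty.arrow Ty.nat (Ty.arrow (Ty.circ E) (Ty.arrow (Ty.circ E) (Ty.circ E))))
  | fix {B : Base} {σ : Ty} :
      YShape σ →
      (∀ p ∈ surfList B (σ :: codom B), Judg p.1 p.2 Ty.idx) →
      Judg B (Tm.fix σ) (Ty.arrow (Ty.arrow σ σ) σ)
  | get {B : Base} :
      (∀ p ∈ surfList B (codom B), Judg p.1 p.2 Ty.idx) →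
      Judg B Tm.getOp (Ty.arrow Ty.nat (Ty.arrow Ty.nat Ty.nat))
  | set {B : Base} :
      (∀ p ∈ surfList B (codom B), Judg p.1 p.2 Ty.idx) →
      Judg B Tm.setOp (Ty.arrow Ty.nat (Ty.arrow Ty.nat Ty.nat))
  | idxNat {B : Base} {M : Tm} :
      Judg B M Ty.idx → Judg B M Ty.nat
  | num {B : Base} {n : ℕ} :
      (∀ p ∈ surfList B (codom B), Judg p.1 p.2 Ty.idx) →
      Judg B (Tm.num n) Ty.idx
  | add {B : Base} {E₀ E₁ : Tm} :
      Judg B E₀ Ty.idx → Judg B E₁ Ty.idx → Judg B (Tm.add E₀ E₁) Ty.idx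
  | mul {B : Base} {E₀ E₁ : Tm} :
      Judg B E₀ Ty.idx → Judg B E₁ Ty.idx → Judg B (Tm.mul E₀ E₁) Ty.idx
  | size {B : Base} {M E : Tm} :
      Judg B M (Ty.circ E) → Judg B (Tm.size M) Ty.idx
  | gate {B : Base} {u k : ℕ} :
      (∀ p ∈ surfList B (codom B), Judg p.1 p.2 Ty.idx) →
      Judg B (Tm.gate u k) (Ty.circ (Tm.num k))
  | seqOp {B : Base} {E : Tm} :
      Judg B E Ty.idx →
      Judg B Tm.seqOp (Ty.arrow (Ty.circ E) (Ty.arrow (Ty.circ E) (Ty.circ E)))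
  | parOp {B : Base} {E₀ E₁ : Tm} :
      Judg B E₀ Ty.idx → Judg B E₁ Ty.idx →
      Judg B Tm.parOp (Ty.arrow (Ty.circ E₀) (Ty.arrow (Ty.circ E₁)
        (Ty.circ (Tm.add (Tm.add E₀ E₁) (Tm.num 1)))))
  | revOp {B : Base} {E : Tm} :
      Judg B E Ty.idx →
      Judg B Tm.revOp (Ty.arrow (Ty.circ E) (Ty.circ E))
  | iterOp {B : Base} {E₀ E₁ : Tm} {x : ℕ} :
      Judg B E₀ Ty.idx → Judg B E₁ Ty.idx →
      x ∉ dom B → x ∉ freeTm E₀ → x ∉ freeTm E₁ →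
      Judg B Tm.iterOp (Ty.pi x Ty.idx (Ty.arrow (Ty.circ E₀) (Ty.arrow (Ty.circ E₁)
        (Ty.circ (Tm.add E₀ (Tm.mul (Tm.add (Tm.num 1) E₁) (Tm.var x)))))))
  | dmeas {B : Base} {E : Tm} :
      Judg B E Ty.idx →
      Judg B Tm.dmeasOp (Ty.arrow Ty.nat (Ty.arrow (Ty.circ E) Ty.nat))

end QPCF
namespace QPCF

-- Syntactic sugar for applied operators.
def seqC (C₀ C₁ : Tm) : Tm := Tm.app (Tm.app Tm.seqOp C₀) C₁
def parC (C₀ C₁ : Tm) : Tm := Tm.app (Tm.app Tm.parOp C₀) C₁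
def ifC (M L R : Tm) : Tm := Tm.app (Tm.app (Tm.app Tm.ifOp M) L) R
def getC (M N : Tm) : Tm := Tm.app (Tm.app Tm.getOp M) N
def setC (M N : Tm) : Tm := Tm.app (Tm.app Tm.setOp M) N
def revC (M : Tm) : Tm := Tm.app Tm.revOp M
def iterC (E M₀ M₁ : Tm) : Tm := Tm.app (Tm.app (Tm.app Tm.iterOp E) M₀) M₁
def dmeasC (M N : Tm) : Tm := Tm.app (Tm.app Tm.dmeasOp M) N

/-- Iterated application M P₁ … Pₘ. -/
def apps : Tm → List Tm → Tm
  | t, [] => t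
  | t, p :: ps => apps (Tm.app t p) ps

/-- `parN n C₁ C₀` is `C₁ ∥ ⋯ ∥ C₁ ∥ C₀` with `n` copies of `C₁`. -/
def parN : ℕ → Tm → Tm → Tm
  | 0, _, C₀ => C₀
  | n + 1, C₁, C₀ => parC C₁ (parN n C₁ C₀)

/-- (Evaluated) circuits: strings built from gate names, ∶ and ∥. -/
inductive IsCircuit : Tm → Prop
  | gate (u k : ℕ) : IsCircuit (Tm.gate u k)
  | seq {C₀ C₁ : Tm} : IsCircuit C₀ → IsCircuit C₁ → IsCircuit (seqC C₀ C₁)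
  | par {C₀ C₁ : Tm} : IsCircuit C₀ → IsCircuit C₁ → IsCircuit (parC C₀ C₁)

/-- Parameters of the language: the unitary operator associated to each
gate name (of each arity), and the adjoint-renaming `‡` of gate names. -/
structure QParams where
  gU : (u k : ℕ) → Matrix (Fin (2 ^ (k + 1))) (Fin (2 ^ (k + 1))) ℂ
  adj : ℕ → ℕ → ℕ

def kronEquiv (n₀ n₁ : ℕ) :
    Fin (2 ^ (n₀ + 1)) × Fin (2 ^ (n₁ + 1)) ≃ Fin (2 ^ (n₀ + n₁ + 1 + 1)) :=
  finProdFinEquiv.trans (finCongr (by rw [← pow_add]; congr 1; omega))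

/-- `Hilb`: the interpretation of an (evaluated) circuit of arity n+1 as an
operator on the Hilbert space of dimension 2^(n+1), given by the clauses
of Definition 9. -/
inductive HilbRel (P : QParams) :
    (n : ℕ) → Tm → Matrix (Fin (2 ^ (n + 1))) (Fin (2 ^ (n + 1))) ℂ → Prop
  | gate (u k : ℕ) : HilbRel P k (Tm.gate u k) (P.gU u k)
  | seq {n : ℕ} {C₀ C₁ : Tm} {A₀ A₁ : Matrix (Fin (2 ^ (n + 1))) (Fin (2 ^ (n + 1))) ℂ} :
      HilbRel P n C₀ A₀ → HilbRel P n C₁ A₁ →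
      HilbRel P n (seqC C₀ C₁) (A₀ * A₁)
  | par {n₀ n₁ : ℕ} {C₀ C₁ : Tm}
      {A₀ : Matrix (Fin (2 ^ (n₀ + 1))) (Fin (2 ^ (n₀ + 1))) ℂ}
      {A₁ : Matrix (Fin (2 ^ (n₁ + 1))) (Fin (2 ^ (n₁ + 1))) ℂ} :
      HilbRel P n₀ C₀ A₀ → HilbRel P n₁ C₁ A₁ →
      HilbRel P (n₀ + n₁ + 1) (parC C₀ C₁)
        (Matrix.reindex (kronEquiv n₀ n₁) (kronEquiv n₀ n₁)
          (Matrix.kroneckerMap (· * ·) A₀ A₁))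

/-- `circuitEvalRel P n x C i pr`: running the circuit `C` (of arity n+1) on the
basis state determined by `x` and totally measuring yields outcome `i` with
(nonzero) probability `pr`. -/
noncomputable def circuitEvalRel (P : QParams) (n x : ℕ) (C : Tm) (i : ℕ) (pr : ℝ) : Prop :=
  ∃ A, HilbRel P n C A ∧ ∃ hi : i < 2 ^ (n + 1),
    pr = ‖(A.mulVec fun j => if (j : ℕ) = x % 2 ^ (n + 1) then 1 else 0) ⟨i, hi⟩‖ ^ 2
    ∧ 0 < pr

/-- The big-step probabilistic operational semantics of qPCF (Table 2):
`Eval P M α V` formalizes `M ⇓^α V`. -/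
inductive Eval (P : QParams) : Tm → ℝ → Tm → Prop
  | num (n : ℕ) : Eval P (Tm.num n) 1 (Tm.num n)
  | succ {M : Tm} {n : ℕ} {α : ℝ} :
      Eval P M α (Tm.num n) → Eval P (Tm.app Tm.succOp M) α (Tm.num (n + 1))
  | pred {M : Tm} {n : ℕ} {α : ℝ} :
      Eval P M α (Tm.num (n + 1)) → Eval P (Tm.app Tm.predOp M) α (Tm.num n)
  | beta {x : ℕ} {σ : Ty} {M N V : Tm} {Ps : List Tm} {α : ℝ} :
      Eval P (apps (substTm M x N) Ps) α V →
      Eval P (apps (Tm.app (Tm.lam x σ M) N) Ps) α V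
  | ifL {M L R V : Tm} {α α' : ℝ} :
      Eval P M α (Tm.num 0) → Eval P L α' V → Eval P (ifC M L R) (α * α') V
  | ifR {M L R V : Tm} {n : ℕ} {α α' : ℝ} :
      Eval P M α (Tm.num (n + 1)) → Eval P R α' V → Eval P (ifC M L R) (α * α') V
  | fix {σ : Ty} {M V : Tm} {Ps : List Tm} {α : ℝ} :
      Eval P (apps (Tm.app M (Tm.app (Tm.fix σ) M)) Ps) α V →
      Eval P (apps (Tm.app (Tm.fix σ) M) Ps) α V
  | size {M E : Tm} {n : ℕ} {α : ℝ} :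
      Judg [] M (Ty.circ E) → Eval P E α (Tm.num n) →
      Eval P (Tm.size M) α (Tm.num n)
  | add {E₀ E₁ : Tm} {m n : ℕ} {α α' : ℝ} :
      Eval P E₀ α (Tm.num m) → Eval P E₁ α' (Tm.num n) →
      Eval P (Tm.add E₀ E₁) (α * α') (Tm.num (m + n))
  | mul {E₀ E₁ : Tm} {m n : ℕ} {α α' : ℝ} :
      Eval P E₀ α (Tm.num m) → Eval P E₁ α' (Tm.num n) →
      Eval P (Tm.mul E₀ E₁) (α * α') (Tm.num (m * n))
  | get {M N : Tm} {m n : ℕ} {α α' : ℝ} :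
      Eval P M α (Tm.num m) → Eval P N α' (Tm.num n) →
      Eval P (getC M N) (α * α') (Tm.num (m / 2 ^ n % 2))
  | set {M N : Tm} {m n m' : ℕ} {α α' : ℝ} :
      Eval P M α (Tm.num m) → Eval P N α' (Tm.num n) →
      m' / 2 ^ n % 2 = 1 → (∀ k, k ≠ n → m' / 2 ^ k % 2 = m / 2 ^ k % 2) →
      Eval P (setC M N) (α * α') (Tm.num m')
  | gate (u k : ℕ) : Eval P (Tm.gate u k) 1 (Tm.gate u k)
  | seq {M₀ M₁ C₀ C₁ : Tm} {α α' : ℝ} :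
      Eval P M₀ α C₀ → Eval P M₁ α' C₁ →
      Eval P (seqC M₀ M₁) (α * α') (seqC C₀ C₁)
  | par {M₀ M₁ C₀ C₁ : Tm} {α α' : ℝ} :
      Eval P M₀ α C₀ → Eval P M₁ α' C₁ →
      Eval P (parC M₀ M₁) (α * α') (parC C₁ C₀)
  | rev₀ {M : Tm} {u k : ℕ} {α : ℝ} :
      Eval P M α (Tm.gate u k) → Eval P (revC M) α (Tm.gate (P.adj u k) k)
  | rev₁ {M C₀ C₁ C₀' C₁' : Tm} {α α' α'' : ℝ} :
      Eval P M α (seqC C₀ C₁) → Eval P (revC C₀) α' C₀' → Eval P (revC C₁) α'' C₁' →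
      Eval P (revC M) (α * α' * α'') (seqC C₁' C₀')
  | rev₂ {M C₀ C₁ C₀' C₁' : Tm} {α α' α'' : ℝ} :
      Eval P M α (parC C₀ C₁) → Eval P (revC C₀) α' C₀' → Eval P (revC C₁) α'' C₁' →
      Eval P (revC M) (α * α' * α'') (parC C₀' C₁')
  | iter {E M₀ M₁ C₀ C₁ : Tm} {n : ℕ} {α α' α'' : ℝ} :
      Eval P E α (Tm.num n) → Eval P M₀ α' C₀ → Eval P M₁ α'' C₁ →
      Eval P (iterC E M₀ M₁) (α * α' * α'') (parN n C₁ C₀)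
  | dmeas {M N C : Tm} {m k n : ℕ} {α α' α'' : ℝ} :
      Eval P M α (Tm.num m) → Eval P N α' C →
      Judg [] N (Ty.circ (Tm.num k)) →
      circuitEvalRel P k m C n α'' →
      Eval P (dmeasC M N) (α * α' * α'') (Tm.num n)

/-- `M ⇓ V`: there exists an evaluation of `M` to `V` with some probability 0 < α ≤ 1. -/
def EvalSome (P : QParams) (M V : Tm) : Prop := ∃ α : ℝ, 0 < α ∧ α ≤ 1 ∧ Eval P M α V

end QPCF
namespace QPCF

/-- Structural depth of a type (number of arrow/Π constructors). -/
def Ty.depth : Ty → ℕ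
  | Ty.nat => 0
  | Ty.idx => 0
  | Ty.circ _ => 0
  | Ty.arrow σ τ => σ.depth + τ.depth + 1
  | Ty.pi _ σ τ => σ.depth + τ.depth + 1

theorem substTy_depth : ∀ (σ : Ty) (x : ℕ) (N : Tm), (substTy σ x N).depth = σ.depth
  | Ty.nat, _, _ => rfl
  | Ty.idx, _, _ => rfl
  | Ty.circ _, _, _ => rfl
  | Ty.arrow σ τ, x, N => by
      simp [substTy, Ty.depth, substTy_depth σ x N, substTy_depth τ x N]
  | Ty.pi y σ τ, x, N => by
      by_cases h : y = x <;>
        simp [substTy, Ty.depth, h, substTy_depth σ x N, substTy_depth τ x N]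

@[simp] theorem substBase_length (B : Base) (x : ℕ) (N : Tm) :
    (substBase B x N).length = B.length := by
  simp [substBase]

/-- The computability predicate `Comp` (Definition 7). -/
def Comp (P : QParams) : Base → Tm → Ty → Prop
  | [], M, Ty.nat => Judg [] M Ty.nat
  | [], M, Ty.idx => Judg [] M Ty.idx ∧ ∃ n, Eval P M 1 (Tm.num n)
  | [], M, Ty.circ E =>
      Judg [] M (Ty.circ E) ∧ (Judg [] E Ty.idx ∧ ∃ n, Eval P E 1 (Tm.num n))
  | [], M, Ty.arrow μ τ =>
      Judg [] M (Ty.arrow μ τ) ∧ ∀ N, Comp P [] N μ → Comp P [] (Tm.app M N) τ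
  | [], M, Ty.pi x μ τ =>
      Judg [] M (Ty.pi x μ τ) ∧
        ∀ N, Comp P [] N μ → Comp P [] (Tm.app M N) (substTy τ x N)
  | (x, ν) :: B', M, σ =>
      Judg ((x, ν) :: B') M σ ∧
        ∀ N, Comp P [] N ν →
          Comp P (substBase B' x N) (substTm M x N) (substTy σ x N)
termination_by B _ σ => (B.length, Ty.depth σ)
decreasing_by
  · exact Prod.Lex.right _ (by simp [Ty.depth] <;> omega)
  · exact Prod.Lex.right _ (by simp [Ty.depth] <;> omega)
  · exact Prod.Lex.right _ (by simp [Ty.depth] <;> omega)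
  · exact Prod.Lex.right _ (by simp [substTy_depth, Ty.depth] <;> omega)
  · exact Prod.Lex.left _ _ (by simp)
  · exact Prod.Lex.left _ _ (by simp [substBase])

end QPCF
namespace QPCF

/-- `piTelescope [(z₁,τ₁),…,(zₘ,τₘ)] γ` is `Πz₁^τ₁.…Πzₘ^τₘ.γ`. -/
def piTelescope : List (ℕ × Ty) → Ty → Ty
  | [], γ => γ
  | (z, τ) :: rest, γ => Ty.pi z τ (piTelescope rest γ)

/-- Iterated substitution on terms: `M[N₁/x₁]⋯[Nₖ/xₖ]`. -/
def substTmList : Tm → List (ℕ × Tm) → Tm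
  | M, [] => M
  | M, (x, N) :: rest => substTmList (substTm M x N) rest

/-- Iterated substitution on types: `σ[N₁/x₁]⋯[Nₖ/xₖ]`. -/
def substTyList : Ty → List (ℕ × Tm) → Ty
  | σ, [] => σ
  | σ, (x, N) :: rest => substTyList (substTy σ x N) rest

/-- Pair variables with the terms to be substituted for them. -/
def pairSub (xs : List ℕ) (Ns : List Tm) : List (ℕ × Tm) := List.zip xs Ns

/-- qPCF contexts: terms with a single hole. -/
inductive Ctx : Type
  | hole : Ctx
  | lam : ℕ → Ty → Ctx → Ctx
  | appL : Ctx → Tm → Ctx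
  | appR : Tm → Ctx → Ctx
  | addL : Ctx → Tm → Ctx
  | addR : Tm → Ctx → Ctx
  | mulL : Ctx → Tm → Ctx
  | mulR : Tm → Ctx → Ctx
  | size : Ctx → Ctx

/-- Filling the hole of a context with a term. -/
def Ctx.fill : Ctx → Tm → Tm
  | Ctx.hole, M => M
  | Ctx.lam x σ C, M => Tm.lam x σ (C.fill M)
  | Ctx.appL C N, M => Tm.app (C.fill M) N
  | Ctx.appR N C, M => Tm.app N (C.fill M)
  | Ctx.addL C N, M => Tm.add (C.fill M) N
  | Ctx.addR N C, M => Tm.add N (C.fill M)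
  | Ctx.mulL C N, M => Tm.mul (C.fill M) N
  | Ctx.mulR N C, M => Tm.mul N (C.fill M)
  | Ctx.size C, M => Tm.size (C.fill M)

-- Syntactic occurrence of a type inside a type / a term.
mutual
inductive OccTy : Ty → Ty → Prop
  | refl (t : Ty) : OccTy t t
  | circ {t : Ty} {E : Tm} : OccTm t E → OccTy t (Ty.circ E)
  | arrowL {t σ τ : Ty} : OccTy t σ → OccTy t (Ty.arrow σ τ)
  | arrowR {t σ τ : Ty} : OccTy t τ → OccTy t (Ty.arrow σ τ)
  | piL {t σ τ : Ty} {x : ℕ} : OccTy t σ → OccTy t (Ty.pi x σ τ)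
  | piR {t σ τ : Ty} {x : ℕ} : OccTy t τ → OccTy t (Ty.pi x σ τ)

inductive OccTm : Ty → Tm → Prop
  | lamTy {t : Ty} {x : ℕ} {σ : Ty} {M : Tm} : OccTy t σ → OccTm t (Tm.lam x σ M)
  | lamBody {t : Ty} {x : ℕ} {σ : Ty} {M : Tm} : OccTm t M → OccTm t (Tm.lam x σ M)
  | appL {t : Ty} {M N : Tm} : OccTm t M → OccTm t (Tm.app M N)
  | appR {t : Ty} {M N : Tm} : OccTm t N → OccTm t (Tm.app M N)
  | fix {t σ : Ty} : OccTy t σ → OccTm t (Tm.fix σ)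
  | addL {t : Ty} {M N : Tm} : OccTm t M → OccTm t (Tm.add M N)
  | addR {t : Ty} {M N : Tm} : OccTm t N → OccTm t (Tm.add M N)
  | mulL {t : Ty} {M N : Tm} : OccTm t M → OccTm t (Tm.mul M N)
  | mulR {t : Ty} {M N : Tm} : OccTm t N → OccTm t (Tm.mul M N)
  | size {t : Ty} {M : Tm} : OccTm t M → OccTm t (Tm.size M)
end

/-- A type occurs (syntactically) in a typing judgment `B ⊢ M : σ` if it occurs
in some type of the base `B`, in the subject `M`, or in the type `σ`. -/
def OccJudgment (t : Ty) (j : Base × Tm × Ty) : Prop :=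
  (∃ τ ∈ codom j.1, OccTy t τ) ∨ OccTm t j.2.1 ∨ OccTy t j.2.2

/-- `Reach B M σ (B', M', σ')` holds iff some typing derivation concluding
`B ⊢ M : σ` contains a (sub)derivation concluding `B' ⊢ M' : σ'`: it mirrors
the rules of Table 1, descending into one premise. -/
inductive Reach : Base → Tm → Ty → Base × Tm × Ty → Prop
  | here {B : Base} {M : Tm} {σ : Ty} :
      Judg B M σ → Reach B M σ (B, M, σ)
  | var {B : Base} {x : ℕ} {σ : Ty} {q : Base × Tm} {j} :
      (x, σ) ∈ B →
      (∀ p ∈ surfList B (codom B), Judg p.1 p.2 Ty.idx) →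
      q ∈ surfList B (codom B) → Reach q.1 q.2 Ty.idx j →
      Reach B (Tm.var x) σ j
  | lam {B : Base} {x : ℕ} {σ τ : Ty} {N : Tm} {j} :
      x ∉ dom B → Reach ((x, σ) :: B) N τ j →
      Reach B (Tm.lam x σ N) (Ty.pi x σ τ) j
  | appPi₁ {B : Base} {P Q : Tm} {x : ℕ} {σ τ : Ty} {j} :
      Reach B P (Ty.pi x σ τ) j → Judg B Q σ →
      Reach B (Tm.app P Q) (substTy τ x Q) j
  | appPi₂ {B : Base} {P Q : Tm} {x : ℕ} {σ τ : Ty} {j} :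
      Judg B P (Ty.pi x σ τ) → Reach B Q σ j →
      Reach B (Tm.app P Q) (substTy τ x Q) j
  | appArrow₁ {B : Base} {P Q : Tm} {σ τ : Ty} {j} :
      Reach B P (Ty.arrow σ τ) j → Judg B Q σ →
      Reach B (Tm.app P Q) τ j
  | appArrow₂ {B : Base} {P Q : Tm} {σ τ : Ty} {j} :
      Judg B P (Ty.arrow σ τ) → Reach B Q σ j →
      Reach B (Tm.app P Q) τ j
  | succ {B : Base} {q : Base × Tm} {j} :
      (∀ p ∈ surfList B (codom B), Judg p.1 p.2 Ty.idx) →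
      q ∈ surfList B (codom B) → Reach q.1 q.2 Ty.idx j →
      Reach B Tm.succOp (Ty.arrow Ty.nat Ty.nat) j
  | pred {B : Base} {q : Base × Tm} {j} :
      (∀ p ∈ surfList B (codom B), Judg p.1 p.2 Ty.idx) →
      q ∈ surfList B (codom B) → Reach q.1 q.2 Ty.idx j →
      Reach B Tm.predOp (Ty.arrow Ty.nat Ty.nat) j
  | ifNat {B : Base} {q : Base × Tm} {j} :
      (∀ p ∈ surfList B (codom B), Judg p.1 p.2 Ty.idx) →
      q ∈ surfList B (codom B) → Reach q.1 q.2 Ty.idx j →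
      Reach B Tm.ifOp (Ty.arrow Ty.nat (Ty.arrow Ty.nat (Ty.arrow Ty.nat Ty.nat))) j
  | ifCirc {B : Base} {E : Tm} {j} :
      Reach B E Ty.idx j →
      Reach B Tm.ifOp (Ty.arrow Ty.nat (Ty.arrow (Ty.circ E) (Ty.arrow (Ty.circ E) (Ty.circ E)))) j
  | fix {B : Base} {σ : Ty} {q : Base × Tm} {j} :
      YShape σ →
      (∀ p ∈ surfList B (σ :: codom B), Judg p.1 p.2 Ty.idx) →
      q ∈ surfList B (σ :: codom B) → Reach q.1 q.2 Ty.idx j →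
      Reach B (Tm.fix σ) (Ty.arrow (Ty.arrow σ σ) σ) j
  | get {B : Base} {q : Base × Tm} {j} :
      (∀ p ∈ surfList B (codom B), Judg p.1 p.2 Ty.idx) →
      q ∈ surfList B (codom B) → Reach q.1 q.2 Ty.idx j →
      Reach B Tm.getOp (Ty.arrow Ty.nat (Ty.arrow Ty.nat Ty.nat)) j
  | set {B : Base} {q : Base × Tm} {j} :
      (∀ p ∈ surfList B (codom B), Judg p.1 p.2 Ty.idx) →
      q ∈ surfList B (codom B) → Reach q.1 q.2 Ty.idx j →
      Reach B Tm.setOp (Ty.arrow Ty.nat (Ty.arrow Ty.nat Ty.nat)) j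
  | idxNat {B : Base} {M : Tm} {j} :
      Reach B M Ty.idx j → Reach B M Ty.nat j
  | num {B : Base} {n : ℕ} {q : Base × Tm} {j} :
      (∀ p ∈ surfList B (codom B), Judg p.1 p.2 Ty.idx) →
      q ∈ surfList B (codom B) → Reach q.1 q.2 Ty.idx j →
      Reach B (Tm.num n) Ty.idx j
  | add₁ {B : Base} {E₀ E₁ : Tm} {j} :
      Reach B E₀ Ty.idx j → Judg B E₁ Ty.idx → Reach B (Tm.add E₀ E₁) Ty.idx j
  | add₂ {B : Base} {E₀ E₁ : Tm} {j} :
      Judg B E₀ Ty.idx → Reach B E₁ Ty.idx j → Reach B (Tm.add E₀ E₁) Ty.idx j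
  | mul₁ {B : Base} {E₀ E₁ : Tm} {j} :
      Reach B E₀ Ty.idx j → Judg B E₁ Ty.idx → Reach B (Tm.mul E₀ E₁) Ty.idx j
  | mul₂ {B : Base} {E₀ E₁ : Tm} {j} :
      Judg B E₀ Ty.idx → Reach B E₁ Ty.idx j → Reach B (Tm.mul E₀ E₁) Ty.idx j
  | size {B : Base} {M E : Tm} {j} :
      Reach B M (Ty.circ E) j → Reach B (Tm.size M) Ty.idx j
  | gate {B : Base} {u k : ℕ} {q : Base × Tm} {j} :
      (∀ p ∈ surfList B (codom B), Judg p.1 p.2 Ty.idx) →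
      q ∈ surfList B (codom B) → Reach q.1 q.2 Ty.idx j →
      Reach B (Tm.gate u k) (Ty.circ (Tm.num k)) j
  | seqOp {B : Base} {E : Tm} {j} :
      Reach B E Ty.idx j →
      Reach B Tm.seqOp (Ty.arrow (Ty.circ E) (Ty.arrow (Ty.circ E) (Ty.circ E))) j
  | parOp₁ {B : Base} {E₀ E₁ : Tm} {j} :
      Reach B E₀ Ty.idx j → Judg B E₁ Ty.idx →
      Reach B Tm.parOp (Ty.arrow (Ty.circ E₀) (Ty.arrow (Ty.circ E₁)
        (Ty.circ (Tm.add (Tm.add E₀ E₁) (Tm.num 1))))) j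
  | parOp₂ {B : Base} {E₀ E₁ : Tm} {j} :
      Judg B E₀ Ty.idx → Reach B E₁ Ty.idx j →
      Reach B Tm.parOp (Ty.arrow (Ty.circ E₀) (Ty.arrow (Ty.circ E₁)
        (Ty.circ (Tm.add (Tm.add E₀ E₁) (Tm.num 1))))) j
  | revOp {B : Base} {E : Tm} {j} :
      Reach B E Ty.idx j →
      Reach B Tm.revOp (Ty.arrow (Ty.circ E) (Ty.circ E)) j
  | iterOp₁ {B : Base} {E₀ E₁ : Tm} {x : ℕ} {j} :
      Reach B E₀ Ty.idx j → Judg B E₁ Ty.idx →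
      x ∉ dom B → x ∉ freeTm E₀ → x ∉ freeTm E₁ →
      Reach B Tm.iterOp (Ty.pi x Ty.idx (Ty.arrow (Ty.circ E₀) (Ty.arrow (Ty.circ E₁)
        (Ty.circ (Tm.add E₀ (Tm.mul (Tm.add (Tm.num 1) E₁) (Tm.var x))))))) j
  | iterOp₂ {B : Base} {E₀ E₁ : Tm} {x : ℕ} {j} :
      Judg B E₀ Ty.idx → Reach B E₁ Ty.idx j →
      x ∉ dom B → x ∉ freeTm E₀ → x ∉ freeTm E₁ →
      Reach B Tm.iterOp (Ty.pi x Ty.idx (Ty.arrow (Ty.circ E₀) (Ty.arrow (Ty.circ E₁)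
        (Ty.circ (Tm.add E₀ (Tm.mul (Tm.add (Tm.num 1) E₁) (Tm.var x))))))) j
  | dmeas {B : Base} {E : Tm} {j} :
      Reach B E Ty.idx j →
      Reach B Tm.dmeasOp (Ty.arrow Ty.nat (Ty.arrow (Ty.circ E) Ty.nat)) j

end QPCF

namespace QPCF

/-! ### Auxiliary development: erasure to a simple type system -/

/-- Simple types: erasure of qPCF types (indices in Circ-types are forgotten,
Π-types collapse to arrows). -/
inductive STy : Type
  | nat : STy
  | idx : STy
  | circ : STy
  | arrow : STy → STy → STy

/-- Erasure of qPCF types to simple types. -/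
def erase : Ty → STy
  | Ty.nat => STy.nat
  | Ty.idx => STy.idx
  | Ty.circ _ => STy.circ
  | Ty.arrow σ τ => STy.arrow (erase σ) (erase τ)
  | Ty.pi _ σ τ => STy.arrow (erase σ) (erase τ)

theorem erase_substTy : ∀ (τ : Ty) (x : ℕ) (N : Tm), erase (substTy τ x N) = erase τ
  | Ty.nat, _, _ => rfl
  | Ty.idx, _, _ => rfl
  | Ty.circ _, _, _ => rfl
  | Ty.arrow σ τ, x, N => by
      simp [substTy, erase, erase_substTy σ x N, erase_substTy τ x N]
  | Ty.pi y σ τ, x, N => by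
      by_cases h : y = x <;>
        simp [substTy, erase, h, erase_substTy σ x N, erase_substTy τ x N]

/-- A simple (non-dependent) typing judgment with function environments;
no freshness side conditions, so it is robust under substitution. -/
inductive SJudg : (ℕ → Option STy) → Tm → STy → Prop
  | var {ρ x s} : ρ x = some s → SJudg ρ (Tm.var x) s
  | lam {ρ x σ M s} :
      SJudg (Function.update ρ x (some (erase σ))) M s →
      SJudg ρ (Tm.lam x σ M) (STy.arrow (erase σ) s)
  | app {ρ M N t s} : SJudg ρ M (STy.arrow t s) → SJudg ρ N t → SJudg ρ (Tm.app M N) s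
  | coe {ρ M} : SJudg ρ M STy.idx → SJudg ρ M STy.nat
  | num {ρ n} : SJudg ρ (Tm.num n) STy.idx
  | succ {ρ} : SJudg ρ Tm.succOp (STy.arrow STy.nat STy.nat)
  | pred {ρ} : SJudg ρ Tm.predOp (STy.arrow STy.nat STy.nat)
  | ifNat {ρ} : SJudg ρ Tm.ifOp (STy.arrow STy.nat (STy.arrow STy.nat (STy.arrow STy.nat STy.nat)))
  | ifCirc {ρ} : SJudg ρ Tm.ifOp (STy.arrow STy.nat (STy.arrow STy.circ (STy.arrow STy.circ STy.circ)))
  | fix {ρ σ} : SJudg ρ (Tm.fix σ) (STy.arrow (STy.arrow (erase σ) (erase σ)) (erase σ))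
  | getOp {ρ} : SJudg ρ Tm.getOp (STy.arrow STy.nat (STy.arrow STy.nat STy.nat))
  | setOp {ρ} : SJudg ρ Tm.setOp (STy.arrow STy.nat (STy.arrow STy.nat STy.nat))
  | add {ρ E₀ E₁} : SJudg ρ E₀ STy.idx → SJudg ρ E₁ STy.idx → SJudg ρ (Tm.add E₀ E₁) STy.idx
  | mul {ρ E₀ E₁} : SJudg ρ E₀ STy.idx → SJudg ρ E₁ STy.idx → SJudg ρ (Tm.mul E₀ E₁) STy.idx
  | size {ρ M} : SJudg ρ M STy.circ → SJudg ρ (Tm.size M) STy.idx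
  | gate {ρ u k} : SJudg ρ (Tm.gate u k) STy.circ
  | seqOp {ρ} : SJudg ρ Tm.seqOp (STy.arrow STy.circ (STy.arrow STy.circ STy.circ))
  | parOp {ρ} : SJudg ρ Tm.parOp (STy.arrow STy.circ (STy.arrow STy.circ STy.circ))
  | revOp {ρ} : SJudg ρ Tm.revOp (STy.arrow STy.circ STy.circ)
  | iterOp {ρ} : SJudg ρ Tm.iterOp (STy.arrow STy.idx (STy.arrow STy.circ (STy.arrow STy.circ STy.circ)))
  | dmeasOp {ρ} : SJudg ρ Tm.dmeasOp (STy.arrow STy.nat (STy.arrow STy.circ STy.nat))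

/-- Environment monotonicity for the simple system. -/
theorem SJudg.mono {ρ M s} (h : SJudg ρ M s) :
    ∀ {ρ' : ℕ → Option STy}, (∀ y v, ρ y = some v → ρ' y = some v) → SJudg ρ' M s := by
  induction h with
  | var h => exact fun hsub => SJudg.var (hsub _ _ h)
  | @lam ρ0 x σ M0 s0 h ih =>
      intro ρ' hsub
      refine SJudg.lam (ih ?_)
      intro y v hy
      rcases eq_or_ne y x with rfl | hne
      · simpa [Function.update] using hy
      · simp only [Function.update, dif_neg hne] at hy ⊢
        exact hsub _ _ hy
  | app h1 h2 ih1 ih2 => exact fun hsub => SJudg.app (ih1 hsub) (ih2 hsub)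
  | coe h ih => exact fun hsub => SJudg.coe (ih hsub)
  | num => exact fun _ => SJudg.num
  | succ => exact fun _ => SJudg.succ
  | pred => exact fun _ => SJudg.pred
  | ifNat => exact fun _ => SJudg.ifNat
  | ifCirc => exact fun _ => SJudg.ifCirc
  | fix => exact fun _ => SJudg.fix
  | getOp => exact fun _ => SJudg.getOp
  | setOp => exact fun _ => SJudg.setOp
  | add h1 h2 ih1 ih2 => exact fun hsub => SJudg.add (ih1 hsub) (ih2 hsub)
  | mul h1 h2 ih1 ih2 => exact fun hsub => SJudg.mul (ih1 hsub) (ih2 hsub)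
  | size h ih => exact fun hsub => SJudg.size (ih hsub)
  | gate => exact fun _ => SJudg.gate
  | seqOp => exact fun _ => SJudg.seqOp
  | parOp => exact fun _ => SJudg.parOp
  | revOp => exact fun _ => SJudg.revOp
  | iterOp => exact fun _ => SJudg.iterOp
  | dmeasOp => exact fun _ => SJudg.dmeasOp

/-- Substitution lemma for the simple system (for terms typable in every
environment, e.g. closed terms). -/
theorem SJudg.subst {ρ M s} (h : SJudg ρ M s) :
    ∀ {x : ℕ} {t : STy} {N : Tm}, ρ x = some t → (∀ ρ', SJudg ρ' N t) →
      SJudg (Function.update ρ x none) (substTm M x N) s := by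
  induction h with
  | @var ρ0 y s0 hy =>
      intro x t N hx hN
      by_cases hxy : y = x
      · subst hxy
        have : s0 = t := by rw [hy] at hx; exact Option.some.inj hx
        subst this
        simpa [substTm] using hN _
      · simp only [substTm, if_neg hxy]
        exact SJudg.var (by simpa [Function.update, hxy] using hy)
  | @lam ρ0 y σ M0 s0 hbody ih =>
      intro x t N hx hN
      by_cases hyx : y = x
      · subst hyx
        simp only [substTm, if_pos rfl]
        have hb : SJudg (Function.update (Function.update ρ0 y none) y
            (some (erase (substTy σ y N)))) M0 s0 := by
          rw [Function.update_idem, erase_substTy]; exact hbody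
        have := SJudg.lam hb
        rwa [erase_substTy] at this
      · simp only [substTm, if_neg hyx]
        have hx' : Function.update ρ0 y (some (erase σ)) x = some t := by
          rw [Function.update_of_ne (fun h => hyx h.symm)]; exact hx
        have hb := ih hx' hN
        rw [Function.update_comm hyx] at hb
        have hb' : SJudg (Function.update (Function.update ρ0 x none) y
            (some (erase (substTy σ x N)))) (substTm M0 x N) s0 := by
          rwa [erase_substTy]
        have := SJudg.lam hb'
        rwa [erase_substTy] at this
  | app h1 h2 ih1 ih2 =>
      intro x t N hx hN
      exact SJudg.app (ih1 hx hN) (ih2 hx hN)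
  | coe h ih => intro x t N hx hN; exact SJudg.coe (ih hx hN)
  | num => intro x t N hx hN; exact SJudg.num
  | succ => intro x t N hx hN; exact SJudg.succ
  | pred => intro x t N hx hN; exact SJudg.pred
  | ifNat => intro x t N hx hN; exact SJudg.ifNat
  | ifCirc => intro x t N hx hN; exact SJudg.ifCirc
  | @fix ρ0 σ =>
      intro x t N hx hN
      have := @SJudg.fix (Function.update ρ0 x none) (substTy σ x N)
      rw [erase_substTy] at this
      simpa [substTm] using this
  | getOp => intro x t N hx hN; exact SJudg.getOp
  | setOp => intro x t N hx hN; exact SJudg.setOp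
  | add h1 h2 ih1 ih2 =>
      intro x t N hx hN
      exact SJudg.add (ih1 hx hN) (ih2 hx hN)
  | mul h1 h2 ih1 ih2 =>
      intro x t N hx hN
      exact SJudg.mul (ih1 hx hN) (ih2 hx hN)
  | size h ih => intro x t N hx hN; exact SJudg.size (ih hx hN)
  | gate => intro x t N hx hN; exact SJudg.gate
  | seqOp => intro x t N hx hN; exact SJudg.seqOp
  | parOp => intro x t N hx hN; exact SJudg.parOp
  | revOp => intro x t N hx hN; exact SJudg.revOp
  | iterOp => intro x t N hx hN; exact SJudg.iterOp
  | dmeasOp => intro x t N hx hN; exact SJudg.dmeasOp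

/-- The environment induced by a base (first match). -/
def toEnv (B : Base) : ℕ → Option STy := fun y => (List.lookup y B).map erase

theorem toEnv_cons (x : ℕ) (σ : Ty) (B : Base) :
    toEnv ((x, σ) :: B) = Function.update (toEnv B) x (some (erase σ)) := by
  funext y
  by_cases h : y = x
  · subst h; simp [toEnv, List.lookup, Function.update]
  · have hb : (y == x) = false := beq_eq_false_iff_ne.mpr h
    simp [toEnv, List.lookup, hb, Function.update, h]

theorem lookup_mem_nodup : ∀ {B : Base} {x : ℕ} {σ : Ty},
    (x, σ) ∈ B → (dom B).Nodup → List.lookup x B = some σ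
  | [], x, σ, hm, _ => by simp at hm
  | (y, ρ) :: B, x, σ, hm, hnd => by
      rcases List.mem_cons.1 hm with heq | hmem
      · cases heq; simp [List.lookup]
      · have hnd' : (dom B).Nodup := (List.nodup_cons.1 (by simpa [dom] using hnd)).2
        have hy : y ∉ dom B := (List.nodup_cons.1 (by simpa [dom] using hnd)).1
        have hxy : x ≠ y := by
          rintro rfl
          exact hy (by simpa [dom] using List.mem_map_of_mem (f := Prod.fst) hmem)
        have hb : (x == y) = false := beq_eq_false_iff_ne.mpr hxy
        simp [List.lookup, hb, lookup_mem_nodup hmem hnd']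

/-- Soundness of erasure: every qPCF typing judgment (over a base with
no duplicate variables) yields a simple typing. -/
theorem sound {B M τ} (h : Judg B M τ) : (dom B).Nodup → SJudg (toEnv B) M (erase τ) := by
  induction h with
  | var hmem hsurf ih =>
      intro hnd
      exact SJudg.var (by simp [toEnv, lookup_mem_nodup hmem hnd])
  | @lam B x σ τ N hx hN ih =>
      intro hnd
      have hnd' : (dom ((x, σ) :: B)).Nodup := by
        have hd : dom ((x, σ) :: B) = x :: dom B := by simp [dom]
        rw [hd]
        exact List.nodup_cons.2 ⟨hx, hnd⟩
      have := ih hnd'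
      rw [toEnv_cons] at this
      exact SJudg.lam this
  | appPi h1 h2 ih1 ih2 =>
      intro hnd
      rw [erase_substTy]
      exact SJudg.app (ih1 hnd) (ih2 hnd)
  | appArrow h1 h2 ih1 ih2 => intro hnd; exact SJudg.app (ih1 hnd) (ih2 hnd)
  | succ _ _ => intro _; exact SJudg.succ
  | pred _ _ => intro _; exact SJudg.pred
  | ifNat _ _ => intro _; exact SJudg.ifNat
  | ifCirc _ _ => intro _; exact SJudg.ifCirc
  | fix _ _ _ => intro _; exact SJudg.fix
  | get _ _ => intro _; exact SJudg.getOp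
  | set _ _ => intro _; exact SJudg.setOp
  | idxNat _ ih => intro hnd; exact SJudg.coe (ih hnd)
  | num _ _ => intro _; exact SJudg.num
  | add _ _ ih1 ih2 => intro hnd; exact SJudg.add (ih1 hnd) (ih2 hnd)
  | mul _ _ ih1 ih2 => intro hnd; exact SJudg.mul (ih1 hnd) (ih2 hnd)
  | size _ ih => intro hnd; exact SJudg.size (ih hnd)
  | gate _ _ => intro _; exact SJudg.gate
  | seqOp _ _ => intro _; exact SJudg.seqOp
  | parOp _ _ _ _ => intro _; exact SJudg.parOp
  | revOp _ _ => intro _; exact SJudg.revOp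
  | iterOp _ _ _ _ _ _ _ => intro _; exact SJudg.iterOp
  | dmeas _ _ => intro _; exact SJudg.dmeasOp

/-- Inversion of applications in the simple system (the coercion rule can be
applied at most once, since it produces `nat` from `idx`). -/
theorem inv_app {ρ M N s} (h : SJudg ρ (Tm.app M N) s) :
    ∃ t s', SJudg ρ M (STy.arrow t s') ∧ SJudg ρ N t ∧
      (s' = s ∨ (s' = STy.idx ∧ s = STy.nat)) := by
  cases h with
  | app h1 h2 => exact ⟨_, _, h1, h2, Or.inl rfl⟩
  | coe h =>
      cases h with
      | app h1 h2 => exact ⟨_, _, h1, h2, Or.inr ⟨rfl, rfl⟩⟩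

/-- The empty environment. -/
def nilEnv : ℕ → Option STy := fun _ => none

/-- Replacing the head of an iterated application by one admitting all the
same simple types. -/
theorem apps_repl {ρ : ℕ → Option STy} :
    ∀ (Ps : List Tm) {H H' : Tm},
      (∀ s', SJudg ρ H s' → SJudg ρ H' s') →
      ∀ {s}, SJudg ρ (apps H Ps) s → SJudg ρ (apps H' Ps) s
  | [], _, _, hrep, s, h => hrep s h
  | p :: ps, H, H', hrep, s, h => by
      simp only [apps] at h ⊢
      refine apps_repl ps (fun s' h' => ?_) h
      obtain ⟨t, s'', h1, h2, hc⟩ := inv_app h'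
      have h1' := hrep _ h1
      rcases hc with rfl | ⟨rfl, rfl⟩
      · exact SJudg.app h1' h2
      · exact SJudg.coe (SJudg.app h1' h2)

theorem parN_circ {ρ : ℕ → Option STy} {C₀ C₁ : Tm} (h0 : SJudg ρ C₀ STy.circ)
    (h1 : SJudg ρ C₁ STy.circ) : ∀ n, SJudg ρ (parN n C₁ C₀) STy.circ
  | 0 => h0
  | n + 1 => SJudg.app (SJudg.app SJudg.parOp h1) (parN_circ h0 h1 n)

/-- Top-level shapes of values of the operational semantics. -/
inductive TopShape : Tm → Prop
  | num (n : ℕ) : TopShape (Tm.num n)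
  | gate (u k : ℕ) : TopShape (Tm.gate u k)
  | seq (a b : Tm) : TopShape (seqC a b)
  | par (a b : Tm) : TopShape (parC a b)

theorem parN_shape {C₀ C₁ : Tm} (h : TopShape C₀) : ∀ n, TopShape (parN n C₁ C₀)
  | 0 => h
  | n + 1 => TopShape.par C₁ (parN n C₁ C₀)

theorem eval_shape {P : QParams} {M V : Tm} {α : ℝ} (h : Eval P M α V) : TopShape V := by
  induction h with
  | num n => exact TopShape.num n
  | succ _ _ => exact TopShape.num _
  | pred _ _ => exact TopShape.num _
  | beta _ ih => exact ih
  | ifL _ _ _ ih2 => exact ih2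
  | ifR _ _ _ ih2 => exact ih2
  | fix _ ih => exact ih
  | size _ _ _ => exact TopShape.num _
  | add _ _ _ _ => exact TopShape.num _
  | mul _ _ _ _ => exact TopShape.num _
  | get _ _ _ _ => exact TopShape.num _
  | set _ _ _ _ _ _ => exact TopShape.num _
  | gate u k => exact TopShape.gate u k
  | seq _ _ _ _ => exact TopShape.seq _ _
  | par _ _ _ _ => exact TopShape.par _ _
  | rev₀ _ _ => exact TopShape.gate _ _
  | rev₁ _ _ _ _ _ _ => exact TopShape.seq _ _
  | rev₂ _ _ _ _ _ _ => exact TopShape.par _ _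
  | iter _ _ _ _ ih2 _ => exact parN_shape ih2 _
  | dmeas _ _ _ _ _ _ => exact TopShape.num _

/-- Subject reduction for the simple system (for closed terms). -/
theorem sr {P : QParams} {M V : Tm} {α : ℝ} (he : Eval P M α V) :
    ∀ s, SJudg nilEnv M s → SJudg nilEnv V s := by
  induction he with
  | num n => exact fun s hs => hs
  | succ _ _ =>
      intro s hs
      obtain ⟨t, s', h1, h2, hc⟩ := inv_app hs
      cases h1
      rcases hc with rfl | ⟨h', rfl⟩ <;> exact SJudg.coe SJudg.num
  | pred _ _ =>
      intro s hs
      obtain ⟨t, s', h1, h2, hc⟩ := inv_app hs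
      cases h1
      rcases hc with rfl | ⟨h', rfl⟩ <;> exact SJudg.coe SJudg.num
  | @beta x σ M0 N V0 Ps α0 _ ih =>
      intro s hs
      refine ih s (apps_repl Ps (fun s' h' => ?_) hs)
      obtain ⟨t, s'', h1, h2, hc⟩ := inv_app h'
      cases h1 with
      | lam hbody =>
          have hN : ∀ ρ', SJudg ρ' N (erase σ) := fun ρ' =>
            h2.mono (fun y v hv => by simp [nilEnv] at hv)
          have hsub := hbody.subst (N := N)
            (Function.update_self x (some (erase σ)) nilEnv) hN
          rw [Function.update_idem] at hsub
          have heq : Function.update nilEnv x (none : Option STy) = nilEnv := by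
            funext y; by_cases hy : y = x <;> simp [Function.update, nilEnv, hy]
          rw [heq] at hsub
          rcases hc with rfl | ⟨rfl, rfl⟩
          · exact hsub
          · exact SJudg.coe hsub
  | ifL _ _ _ ih2 =>
      intro s hs
      simp only [ifC] at hs
      obtain ⟨t3, s3, hf2, hR, hc3⟩ := inv_app hs
      obtain ⟨t2, s2, hf1, hL, hc2⟩ := inv_app hf2
      obtain ⟨t1, s1, hif, hM, hc1⟩ := inv_app hf1
      rcases hc1 with rfl | ⟨-, h⟩
      · rcases hc2 with rfl | ⟨-, h⟩
        · cases hif with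
          | ifNat =>
              rcases hc3 with rfl | ⟨h', rfl⟩
              · exact ih2 _ hL
              · simp at h'
          | ifCirc =>
              rcases hc3 with rfl | ⟨h', rfl⟩
              · exact ih2 _ hL
              · simp at h'
        · simp at h
      · simp at h
  | ifR _ _ _ ih2 =>
      intro s hs
      simp only [ifC] at hs
      obtain ⟨t3, s3, hf2, hR, hc3⟩ := inv_app hs
      obtain ⟨t2, s2, hf1, hL, hc2⟩ := inv_app hf2
      obtain ⟨t1, s1, hif, hM, hc1⟩ := inv_app hf1
      rcases hc1 with rfl | ⟨-, h⟩
      · rcases hc2 with rfl | ⟨-, h⟩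
        · cases hif with
          | ifNat =>
              rcases hc3 with rfl | ⟨h', rfl⟩
              · exact ih2 _ hR
              · simp at h'
          | ifCirc =>
              rcases hc3 with rfl | ⟨h', rfl⟩
              · exact ih2 _ hR
              · simp at h'
        · simp at h
      · simp at h
  | @fix σ M0 V0 Ps α0 _ ih =>
      intro s hs
      refine ih s (apps_repl Ps (fun s' h' => ?_) hs)
      obtain ⟨t, s'', h1, h2, hc⟩ := inv_app h'
      cases h1
      have hfx : SJudg nilEnv (Tm.app (Tm.fix σ) M0) (erase σ) := SJudg.app SJudg.fix h2
      have hbig := SJudg.app h2 hfx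
      rcases hc with rfl | ⟨he1, rfl⟩
      · exact hbig
      · rw [he1] at hbig; exact SJudg.coe hbig
  | size _ _ _ =>
      intro s hs
      cases hs with
      | size h => exact SJudg.num
      | coe h => exact SJudg.coe SJudg.num
  | add _ _ _ _ =>
      intro s hs
      cases hs with
      | add _ _ => exact SJudg.num
      | coe _ => exact SJudg.coe SJudg.num
  | mul _ _ _ _ =>
      intro s hs
      cases hs with
      | mul _ _ => exact SJudg.num
      | coe _ => exact SJudg.coe SJudg.num
  | get _ _ _ _ =>
      intro s hs
      simp only [getC] at hs
      obtain ⟨t2, s2, hmid, hN, hc2⟩ := inv_app hs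
      obtain ⟨t1, s1, hop, hM, hc1⟩ := inv_app hmid
      rcases hc1 with rfl | ⟨-, h⟩
      · cases hop
        rcases hc2 with rfl | ⟨h', rfl⟩ <;> exact SJudg.coe SJudg.num
      · simp at h
  | set _ _ _ _ _ _ =>
      intro s hs
      simp only [setC] at hs
      obtain ⟨t2, s2, hmid, hN, hc2⟩ := inv_app hs
      obtain ⟨t1, s1, hop, hM, hc1⟩ := inv_app hmid
      rcases hc1 with rfl | ⟨-, h⟩
      · cases hop
        rcases hc2 with rfl | ⟨h', rfl⟩ <;> exact SJudg.coe SJudg.num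
      · simp at h
  | gate u k => exact fun s hs => hs
  | seq _ _ ih1 ih2 =>
      intro s hs
      simp only [seqC] at hs ⊢
      obtain ⟨t2, s2, hmid, hM1, hc2⟩ := inv_app hs
      obtain ⟨t1, s1, hop, hM0, hc1⟩ := inv_app hmid
      rcases hc1 with rfl | ⟨-, h⟩
      · cases hop
        rcases hc2 with rfl | ⟨h', rfl⟩
        · exact SJudg.app (SJudg.app SJudg.seqOp (ih1 _ hM0)) (ih2 _ hM1)
        · simp at h'
      · simp at h
  | par _ _ ih1 ih2 =>
      intro s hs
      simp only [parC] at hs ⊢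
      obtain ⟨t2, s2, hmid, hM1, hc2⟩ := inv_app hs
      obtain ⟨t1, s1, hop, hM0, hc1⟩ := inv_app hmid
      rcases hc1 with rfl | ⟨-, h⟩
      · cases hop
        rcases hc2 with rfl | ⟨h', rfl⟩
        · exact SJudg.app (SJudg.app SJudg.parOp (ih2 _ hM1)) (ih1 _ hM0)
        · simp at h'
      · simp at h
  | rev₀ _ _ =>
      intro s hs
      simp only [revC] at hs
      obtain ⟨t, s', hop, hM, hc⟩ := inv_app hs
      cases hop
      rcases hc with rfl | ⟨h', rfl⟩
      · exact SJudg.gate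
      · simp at h'
  | rev₁ _ _ _ ih1 ih2 ih3 =>
      intro s hs
      simp only [revC] at hs
      simp only [seqC]
      obtain ⟨t, s', hop, hM, hc⟩ := inv_app hs
      cases hop
      have hseq := ih1 _ hM
      simp only [seqC] at hseq
      obtain ⟨t2, s2, hmid, hC1, hc2⟩ := inv_app hseq
      obtain ⟨t1, s1, hop2, hC0, hc1⟩ := inv_app hmid
      rcases hc1 with rfl | ⟨-, h⟩
      · rcases hc2 with rfl | ⟨-, h⟩
        · cases hop2
          have h0' := ih2 _ (SJudg.app SJudg.revOp hC0)
          have h1' := ih3 _ (SJudg.app SJudg.revOp hC1)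
          rcases hc with rfl | ⟨h', rfl⟩
          · exact SJudg.app (SJudg.app SJudg.seqOp h1') h0'
          · simp at h'
        · simp at h
      · simp at h
  | rev₂ _ _ _ ih1 ih2 ih3 =>
      intro s hs
      simp only [revC] at hs
      simp only [parC]
      obtain ⟨t, s', hop, hM, hc⟩ := inv_app hs
      cases hop
      have hpar := ih1 _ hM
      simp only [parC] at hpar
      obtain ⟨t2, s2, hmid, hC1, hc2⟩ := inv_app hpar
      obtain ⟨t1, s1, hop2, hC0, hc1⟩ := inv_app hmid
      rcases hc1 with rfl | ⟨-, h⟩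
      · rcases hc2 with rfl | ⟨-, h⟩
        · cases hop2
          have h0' := ih2 _ (SJudg.app SJudg.revOp hC0)
          have h1' := ih3 _ (SJudg.app SJudg.revOp hC1)
          rcases hc with rfl | ⟨h', rfl⟩
          · exact SJudg.app (SJudg.app SJudg.parOp h0') h1'
          · simp at h'
        · simp at h
      · simp at h
  | iter _ _ _ _ ih2 ih3 =>
      intro s hs
      simp only [iterC] at hs
      obtain ⟨t3, s3, hf2, hM1, hc3⟩ := inv_app hs
      obtain ⟨t2, s2, hf1, hM0, hc2⟩ := inv_app hf2
      obtain ⟨t1, s1, hop, hE, hc1⟩ := inv_app hf1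
      rcases hc1 with rfl | ⟨-, h⟩
      · rcases hc2 with rfl | ⟨-, h⟩
        · cases hop
          rcases hc3 with rfl | ⟨h', rfl⟩
          · exact parN_circ (ih2 _ hM0) (ih3 _ hM1) _
          · simp at h'
        · simp at h
      · simp at h
  | dmeas _ _ _ _ _ _ =>
      intro s hs
      simp only [dmeasC] at hs
      obtain ⟨t2, s2, hmid, hN, hc2⟩ := inv_app hs
      obtain ⟨t1, s1, hop, hM, hc1⟩ := inv_app hmid
      rcases hc1 with rfl | ⟨-, h⟩
      · cases hop
        rcases hc2 with rfl | ⟨h', rfl⟩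
        · exact SJudg.coe SJudg.num
        · simp at h'
      · simp at h

/-- Corollary 2, Preservation at Idx: if ⊢ M : Idx and
M ⇓¹ N then ⊢ N : Idx. -/
theorem idx_preservation (P : QParams) (M N : Tm)
    (h : Judg [] M Ty.idx) (he : Eval P M 1 N) : Judg [] N Ty.idx := by
  have hs0 : SJudg nilEnv M STy.idx := sound h (by simp [dom])
  have hN := sr he STy.idx hs0
  have hshape := eval_shape he
  cases hshape with
  | num n =>
      refine Judg.num ?_
      intro p hp
      simp [surfList, codom] at hp
  | gate u k => cases hN
  | seq a b =>
      exfalso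
      simp only [seqC] at hN
      obtain ⟨t2, s2, hmid, -, hc2⟩ := inv_app hN
      rcases hc2 with rfl | ⟨-, h⟩
      · obtain ⟨t1, s1, hop, -, hc1⟩ := inv_app hmid
        rcases hc1 with rfl | ⟨-, h⟩
        · cases hop
        · simp at h
      · simp at h
  | par a b =>
      exfalso
      simp only [parC] at hN
      obtain ⟨t2, s2, hmid, -, hc2⟩ := inv_app hN
      rcases hc2 with rfl | ⟨-, h⟩
      · obtain ⟨t1, s1, hop, -, hc1⟩ := inv_app hmid
        rcases hc1 with rfl | ⟨-, h⟩
        · cases hop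
        · simp at h
      · simp at h

end QPCF
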